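/- The space G₀ of right-continuous nondecreasing maps from [0,1) to [0,1], regarded as a subset of L²([0,1]), is compact. -/

import Mathlib

open MeasureTheory Filter Topology Set
open scoped NNReal ENNReal

def IsG0 (g : ℝ → ℝ) : Prop :=
  MonotoneOn g (Set.Icc 0 1) ∧
  (∀ t ∈ Set.Ico (0:ℝ) 1, g t ∈ Set.Icc (0:ℝ) 1) ∧
  (∀ t ∈ Set.Ico (0:ℝ) 1, ContinuousWithinAt g (Set.Ici t) t) ∧
  g 1 = 1 ∧ (∀ t < (0:ℝ), g t = g 0) ∧ (∀ t > (1:ℝ), g t = 1)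

/-- The set of "rational data": monotone maps `ℚ → [0,1]`. -/
def Kset : Set (ℚ → ℝ) := {h | Monotone h ∧ ∀ q, h q ∈ Set.Icc (0:ℝ) 1}

/-- The right-limit regularization. -/
noncomputable def cfun (h : ℚ → ℝ) (t : ℝ) : ℝ := sInf (h '' {q : ℚ | t < (q:ℝ)})

noncomputable def gfun (h : ℚ → ℝ) (t : ℝ) : ℝ := if t < 1 then cfun h (max t 0) else 1

lemma cfun_nonempty (h : ℚ → ℝ) (t : ℝ) : (h '' {q : ℚ | t < (q:ℝ)}).Nonempty := by
  obtain ⟨q, hq⟩ := exists_rat_gt t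
  exact ⟨h q, ⟨q, hq, rfl⟩⟩

lemma cfun_bddBelow {h : ℚ → ℝ} (hb : ∀ q, h q ∈ Set.Icc (0:ℝ) 1) (t : ℝ) :
    BddBelow (h '' {q : ℚ | t < (q:ℝ)}) := by
  refine ⟨0, ?_⟩
  rintro x ⟨q, -, rfl⟩
  exact (hb q).1

lemma cfun_le {h : ℚ → ℝ} (hb : ∀ q, h q ∈ Set.Icc (0:ℝ) 1) {t : ℝ} {q : ℚ}
    (hq : t < (q:ℝ)) : cfun h t ≤ h q :=
  csInf_le (cfun_bddBelow hb t) ⟨q, hq, rfl⟩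

lemma le_cfun {h : ℚ → ℝ} {t x : ℝ} (hx : ∀ q : ℚ, t < (q:ℝ) → x ≤ h q) :
    x ≤ cfun h t := by
  refine le_csInf (cfun_nonempty h t) ?_
  rintro y ⟨q, hq, rfl⟩
  exact hx q hq

lemma cfun_mono {h : ℚ → ℝ} (hb : ∀ q, h q ∈ Set.Icc (0:ℝ) 1) {s t : ℝ} (hst : s ≤ t) :
    cfun h s ≤ cfun h t := by
  refine csInf_le_csInf (cfun_bddBelow hb s) (cfun_nonempty h t) ?_
  rintro x ⟨q, hq, rfl⟩
  exact ⟨q, lt_of_le_of_lt hst hq, rfl⟩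

lemma cfun_mem_Icc {h : ℚ → ℝ} (hb : ∀ q, h q ∈ Set.Icc (0:ℝ) 1) (t : ℝ) :
    cfun h t ∈ Set.Icc (0:ℝ) 1 := by
  constructor
  · exact le_cfun fun q _ => (hb q).1
  · obtain ⟨q, hq⟩ := exists_rat_gt t
    exact (cfun_le hb hq).trans (hb q).2

lemma gfun_eq {h : ℚ → ℝ} {t : ℝ} (h0 : 0 ≤ t) (h1 : t < 1) : gfun h t = cfun h t := by
  simp [gfun, h1, max_eq_left h0]

lemma gfun_mem_Icc {h : ℚ → ℝ} (hb : ∀ q, h q ∈ Set.Icc (0:ℝ) 1) (t : ℝ) :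
    gfun h t ∈ Set.Icc (0:ℝ) 1 := by
  unfold gfun
  split
  · exact cfun_mem_Icc hb _
  · exact ⟨zero_le_one, le_refl _⟩

lemma gfun_monotone {h : ℚ → ℝ} (hb : ∀ q, h q ∈ Set.Icc (0:ℝ) 1) : Monotone (gfun h) := by
  intro s t hst
  unfold gfun
  by_cases h1 : t < 1
  · rw [if_pos (lt_of_le_of_lt hst h1), if_pos h1]
    exact cfun_mono hb (max_le_max hst le_rfl)
  · rw [if_neg h1]
    split
    · exact (cfun_mem_Icc hb _).2
    · exact le_rfl

lemma gfun_rightCont {h : ℚ → ℝ} (hb : ∀ q, h q ∈ Set.Icc (0:ℝ) 1) {t : ℝ}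
    (ht : t ∈ Set.Ico (0:ℝ) 1) : ContinuousWithinAt (gfun h) (Set.Ici t) t := by
  rw [Metric.continuousWithinAt_iff]
  intro ε hε
  have hgt : gfun h t = cfun h t := gfun_eq ht.1 ht.2
  have hlt : cfun h t < cfun h t + ε := lt_add_of_pos_right _ hε
  obtain ⟨x, ⟨q, hq, rfl⟩, hxlt⟩ := exists_lt_of_csInf_lt (cfun_nonempty h t) hlt
  have hq' : t < (q:ℝ) := hq
  refine ⟨min ((q:ℝ) - t) (1 - t), lt_min (by linarith) (by linarith [ht.2]), ?_⟩
  intro s hs hds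
  have hst : t ≤ s := hs
  have hsq : s < (q:ℝ) := by
    have := abs_lt.1 (by rwa [Real.dist_eq] at hds)
    nlinarith [this.2, min_le_left ((q:ℝ) - t) (1 - t)]
  have hs1 : s < 1 := by
    have := abs_lt.1 (by rwa [Real.dist_eq] at hds)
    nlinarith [this.2, min_le_right ((q:ℝ) - t) (1 - t)]
  have hgs : gfun h s = cfun h s := gfun_eq (ht.1.trans hst) hs1
  rw [hgs, hgt, Real.dist_eq, abs_lt]
  constructor
  · have := cfun_mono hb hst
    linarith
  · have : cfun h s ≤ h q := cfun_le hb hsq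
    linarith

lemma isG0_gfun {h : ℚ → ℝ} (hh : h ∈ Kset) : IsG0 (gfun h) := by
  obtain ⟨hm, hb⟩ := hh
  refine ⟨(gfun_monotone hb).monotoneOn _, fun t _ => gfun_mem_Icc hb t,
    fun t ht => gfun_rightCont hb ht, ?_, ?_, ?_⟩
  · simp [gfun]
  · intro t ht
    rw [gfun_eq (le_refl 0) one_pos]
    unfold gfun
    rw [if_pos (ht.trans one_pos), max_eq_right ht.le]
  · intro t ht
    simp [gfun, not_lt.2 ht.le]

lemma IsG0.mem_Icc {g : ℝ → ℝ} (hg : IsG0 g) (t : ℝ) : g t ∈ Set.Icc (0:ℝ) 1 := by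
  obtain ⟨hm, hb, -, h1, hneg, hgt⟩ := hg
  rcases lt_or_ge t 0 with h | h
  · rw [hneg t h]; exact hb 0 ⟨le_refl _, one_pos⟩
  rcases lt_or_ge t 1 with h' | h'
  · exact hb t ⟨h, h'⟩
  rcases eq_or_lt_of_le h' with h'' | h''
  · rw [← h'', h1]; exact ⟨zero_le_one, le_refl _⟩
  · rw [hgt t h'']; exact ⟨zero_le_one, le_refl _⟩

lemma IsG0.monotone {g : ℝ → ℝ} (hg : IsG0 g) : Monotone g := by
  have hmem := hg.mem_Icc
  obtain ⟨hm, hb, -, h1, hneg, hgt⟩ := hg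
  intro a b hab
  rcases lt_or_ge b 0 with h | h
  · rw [hneg b h, hneg a (lt_of_le_of_lt hab h)]
  rcases le_or_gt b 1 with h' | h'
  · rcases lt_or_ge a 0 with ha | ha
    · rw [hneg a ha]
      exact hm ⟨le_refl _, zero_le_one⟩ ⟨h, h'⟩ h
    · exact hm ⟨ha, hab.trans h'⟩ ⟨h, h'⟩ hab
  · rw [hgt b h']
    exact (hmem a).2

lemma cfun_restrict_eq {g : ℝ → ℝ} (hg : IsG0 g) {t : ℝ} (h0 : 0 ≤ t) (h1 : t < 1) :
    cfun (fun q : ℚ => g q) t = g t := by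
  have hmono := hg.monotone
  refine le_antisymm ?_ (le_cfun fun q hq => hmono hq.le)
  refine le_of_forall_pos_le_add fun ε hε => ?_
  have hc := hg.2.2.1 t ⟨h0, h1⟩
  rw [Metric.continuousWithinAt_iff] at hc
  obtain ⟨δ, hδ, hcd⟩ := hc ε hε
  obtain ⟨q, hq1, hq2⟩ := exists_rat_btwn (lt_add_of_pos_right t hδ)
  have hd : dist (q:ℝ) t < δ := by
    rw [Real.dist_eq, abs_of_nonneg (by linarith)]; linarith
  have := hcd (Set.mem_Ici.2 hq1.le) hd
  rw [Real.dist_eq] at this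
  have hlt : g q < g t + ε := by
    have := abs_lt.1 this; linarith [this.2]
  exact (cfun_le (fun q => hg.mem_Icc q) hq1).trans hlt.le

lemma gfun_restrict_eq {g : ℝ → ℝ} (hg : IsG0 g) {t : ℝ} (ht : t ∈ Set.Icc (0:ℝ) 1) :
    gfun (fun q : ℚ => g q) t = g t := by
  rcases lt_or_ge t 1 with h1 | h1
  · rw [gfun_eq ht.1 h1, cfun_restrict_eq hg ht.1 h1]
  · have : t = 1 := le_antisymm ht.2 h1
    rw [this, hg.2.2.2.1]
    simp [gfun]

lemma restrict_mem_Kset {g : ℝ → ℝ} (hg : IsG0 g) : (fun q : ℚ => g q) ∈ Kset :=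
  ⟨fun p q hpq => hg.monotone (by exact_mod_cast hpq), fun q => hg.mem_Icc q⟩

lemma tendsto_gfun {H : ℕ → ℚ → ℝ} {h : ℚ → ℝ} (hH : ∀ n, H n ∈ Kset) (hh : h ∈ Kset)
    (hconv : ∀ q : ℚ, Tendsto (fun n => H n q) atTop (𝓝 (h q)))
    {t : ℝ} (ht : t ∈ Set.Ioo (0:ℝ) 1) (hc : ContinuousAt (gfun h) t) :
    Tendsto (fun n => gfun (H n) t) atTop (𝓝 (gfun h t)) := by
  rw [Metric.tendsto_nhds]
  intro ε hε
  rw [Metric.continuousAt_iff] at hc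
  obtain ⟨δ, hδ, hcd⟩ := hc (ε / 2) (by linarith)
  set δ' := min δ (min t (1 - t)) with hδ'def
  have hδ'pos : 0 < δ' := lt_min hδ (lt_min ht.1 (by linarith [ht.2]))
  have hδ'δ : δ' ≤ δ := min_le_left _ _
  have hδ't : δ' ≤ t := (min_le_right _ _).trans (min_le_left _ _)
  have hδ'1 : δ' ≤ 1 - t := (min_le_right _ _).trans (min_le_right _ _)
  -- lower rational point
  obtain ⟨p, hp1, hp2⟩ := exists_rat_btwn (show t - δ' / 2 < t by linarith)
  have hs₁0 : (0:ℝ) ≤ t - δ' / 2 := by linarith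
  have hs₁1 : t - δ' / 2 < 1 := by linarith [ht.2]
  have hds₁ : dist (t - δ' / 2) t < δ := by
    rw [Real.dist_eq, abs_of_nonpos (by linarith)]; linarith
  have hlow : gfun h t - ε / 2 < h p := by
    have h1 := abs_lt.1 (by rw [← Real.dist_eq]; exact hcd hds₁)
    have h2 : cfun h (t - δ' / 2) ≤ h p := cfun_le hh.2 hp1
    rw [gfun_eq hs₁0 hs₁1] at h1
    linarith [h1.1]
  -- upper rational point
  obtain ⟨q, hq1, hq2⟩ := exists_rat_btwn (show t < t + δ' / 2 by linarith)
  have hq0 : (0:ℝ) ≤ (q:ℝ) := by linarith [ht.1]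
  have hq1' : (q:ℝ) < 1 := by linarith
  have hdq : dist (q:ℝ) t < δ := by
    rw [Real.dist_eq, abs_of_nonneg (by linarith)]; linarith
  have hupp : h q < gfun h t + ε / 2 := by
    have h1 := abs_lt.1 (by rw [← Real.dist_eq]; exact hcd hdq)
    have h2 : h q ≤ cfun h q := le_cfun fun q' hq' => hh.1 (by exact_mod_cast hq'.le)
    rw [gfun_eq hq0 hq1'] at h1
    linarith [h1.2]
  filter_upwards [(hconv p).eventually (eventually_gt_nhds hlow),
    (hconv q).eventually (eventually_lt_nhds hupp)] with n h1 h2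
  have hl : H n p ≤ cfun (H n) t := by
    refine le_cfun fun q' hq' => (hH n).1 ?_
    exact_mod_cast (hp2.trans hq').le
  have hu : cfun (H n) t ≤ H n q := cfun_le (hH n).2 hq1
  rw [gfun_eq ht.1.le ht.2, Real.dist_eq, abs_lt]
  constructor <;> linarith

lemma memℒp_gfun {h : ℚ → ℝ} (hh : h ∈ Kset) :
    MemLp (gfun h) 2 (volume.restrict (Set.Icc (0:ℝ) 1)) := by
  haveI : IsFiniteMeasure (volume.restrict (Set.Icc (0:ℝ) 1)) :=
    ⟨by rw [Measure.restrict_apply_univ]; exact measure_Icc_lt_top⟩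
  refine MemLp.of_bound ((gfun_monotone hh.2).measurable.aestronglyMeasurable) 1 ?_
  refine Eventually.of_forall fun t => ?_
  have h1 := gfun_mem_Icc hh.2 t
  rw [Real.norm_eq_abs, abs_le]
  exact ⟨by linarith [h1.1], h1.2⟩

lemma unifIntegrable_gfun {H : ℕ → ℚ → ℝ} (hH : ∀ n, H n ∈ Kset) :
    UnifIntegrable (fun n => gfun (H n)) 2 (volume.restrict (Set.Icc (0:ℝ) 1)) := by
  refine unifIntegrable_of one_le_two (by norm_num)
    (fun n => ((gfun_monotone (hH n).2).measurable.aestronglyMeasurable)) ?_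
  intro ε hε
  refine ⟨2, fun i => ?_⟩
  have hempty : {x | (2:ℝ≥0) ≤ ‖gfun (H i) x‖₊} = ∅ := by
    ext x
    simp only [Set.mem_setOf_eq, Set.mem_empty_iff_false, iff_false, not_le]
    have h1 := gfun_mem_Icc (hH i).2 x
    have : ‖gfun (H i) x‖ < 2 := by
      rw [Real.norm_eq_abs, abs_lt]; constructor <;> linarith [h1.1, h1.2]
    exact_mod_cast this
  rw [hempty, Set.indicator_empty, eLpNorm_zero']
  exact zero_le

theorem G0_isCompact :
    IsCompact {f : Lp ℝ 2 (volume.restrict (Set.Icc (0:ℝ) 1)) |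
      ∃ g : ℝ → ℝ, IsG0 g ∧ (⇑f) =ᵐ[volume.restrict (Set.Icc (0:ℝ) 1)] g} := by
  haveI : Fact ((1:ℝ≥0∞) ≤ 2) := ⟨one_le_two⟩
  haveI : IsFiniteMeasure (volume.restrict (Set.Icc (0:ℝ) 1)) :=
    ⟨by rw [Measure.restrict_apply_univ]; exact measure_Icc_lt_top⟩
  -- compactness of Kset
  have hKc : IsCompact Kset := by
    have hclosed : IsClosed Kset := by
      have heq : Kset = (⋂ (p : ℚ) (q : ℚ) (_ : p ≤ q), {h : ℚ → ℝ | h p ≤ h q}) ∩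
          ⋂ q : ℚ, {h : ℚ → ℝ | h q ∈ Set.Icc (0:ℝ) 1} := by
        ext h
        simp only [Kset, Set.mem_setOf_eq, Set.mem_inter_iff, Set.mem_iInter, Monotone]
      rw [heq]
      exact (isClosed_iInter fun p => isClosed_iInter fun q => isClosed_iInter fun _ =>
        isClosed_le (continuous_apply p) (continuous_apply q)).inter
        (isClosed_iInter fun q => isClosed_Icc.preimage (continuous_apply q))
    exact IsCompact.of_isClosed_subset (isCompact_univ_pi fun _ => isCompact_Icc) hclosed
      (fun h hh q _ => hh.2 q)
  haveI : CompactSpace ↥Kset := isCompact_iff_compactSpace.mp hKc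
  let Φ : ↥Kset → Lp ℝ 2 (volume.restrict (Set.Icc (0:ℝ) 1)) :=
    fun h => (memℒp_gfun h.2).toLp _
  have hΦcont : Continuous Φ := by
    apply SeqContinuous.continuous
    intro H h hconv
    have hcoord : ∀ q : ℚ, Tendsto (fun n => (H n : ℚ → ℝ) q) atTop (𝓝 ((h : ℚ → ℝ) q)) :=
      fun q => ((continuous_apply q).comp continuous_subtype_val).continuousAt.tendsto.comp hconv
    have hae : ∀ᵐ t ∂(volume.restrict (Set.Icc (0:ℝ) 1)),
        Tendsto (fun n => gfun ((H n : ℚ → ℝ)) t) atTop (𝓝 (gfun ((h : ℚ → ℝ)) t)) := by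
      have h1 : ∀ᵐ t ∂(volume.restrict (Set.Icc (0:ℝ) 1)), t ∈ Set.Ioo (0:ℝ) 1 := by
        rw [ae_iff, Measure.restrict_apply (by exact measurableSet_Ioo.compl)]
        refine measure_mono_null (t := ({0,1} : Set ℝ)) ?_ ?_
        · rintro t ⟨htn, ht0, ht1⟩
          simp only [Set.mem_setOf_eq, Set.mem_Ioo, not_and, not_lt] at htn
          rcases eq_or_lt_of_le ht0 with h | h
          · exact Or.inl h.symm
          · exact Or.inr (le_antisymm ht1 (htn h))
        · exact Set.Countable.measure_zero ((Set.countable_singleton 1).insert 0) _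
      have h2 : ∀ᵐ t ∂(volume.restrict (Set.Icc (0:ℝ) 1)),
          ContinuousAt (gfun ((h : ℚ → ℝ))) t := by
        apply ae_restrict_of_ae
        rw [ae_iff]
        exact Set.Countable.measure_zero
          ((gfun_monotone h.2.2).countable_not_continuousAt) _
      filter_upwards [h1, h2] with t ht hct
      exact tendsto_gfun (fun n => (H n).2) h.2 hcoord ht hct
    have hmain := tendsto_Lp_finite_of_tendsto_ae one_le_two (by norm_num)
      (fun n => ((gfun_monotone (H n).2.2).measurable.aestronglyMeasurable))
      (memℒp_gfun h.2) (unifIntegrable_gfun fun n => (H n).2) hae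
    rw [Lp.tendsto_Lp_iff_tendsto_eLpNorm']
    refine hmain.congr fun n => ?_
    exact (eLpNorm_congr_ae (((memℒp_gfun (H n).2).coeFn_toLp).sub
      ((memℒp_gfun h.2).coeFn_toLp))).symm
  have hset : {f : Lp ℝ 2 (volume.restrict (Set.Icc (0:ℝ) 1)) |
      ∃ g : ℝ → ℝ, IsG0 g ∧ (⇑f) =ᵐ[volume.restrict (Set.Icc (0:ℝ) 1)] g} = Set.range Φ := by
    ext f
    constructor
    · rintro ⟨g, hg, hfg⟩
      refine ⟨⟨fun q => g q, restrict_mem_Kset hg⟩, ?_⟩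
      refine Lp.ext ?_
      have h1 : ⇑((memℒp_gfun (restrict_mem_Kset hg)).toLp _)
          =ᵐ[volume.restrict (Set.Icc (0:ℝ) 1)] gfun (fun q : ℚ => g q) :=
        MemLp.coeFn_toLp _
      have h2 : gfun (fun q : ℚ => g q) =ᵐ[volume.restrict (Set.Icc (0:ℝ) 1)] g := by
        filter_upwards [ae_restrict_mem measurableSet_Icc] with t ht
        exact gfun_restrict_eq hg ht
      exact h1.trans (h2.trans hfg.symm)
    · rintro ⟨h, rfl⟩
      exact ⟨gfun (h : ℚ → ℝ), isG0_gfun h.2, MemLp.coeFn_toLp _⟩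
  rw [hset]
  exact isCompact_range hΦcont
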